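/- Let E be the elliptic curve over ℚ defined by the short Weierstrass equation y² = x³ + (32/3)x + 880/27 (which has nonzero discriminant). Then the rational point P = (−4/3, 4) lies on E and has infinite order in the group E(ℚ); that is, P is not a torsion point. -/

import Mathlib

open WeierstrassCurve WeierstrassCurve.Affine

private def Wc : WeierstrassCurve.Affine ℚ :=
  { a₁ := 0, a₂ := 0, a₃ := 0, a₄ := 32 / 3, a₆ := 880 / 27 }

@[simp] private lemma Wa1 : Wc.a₁ = 0 := rfl
@[simp] private lemma Wa2 : Wc.a₂ = 0 := rfl
@[simp] private lemma Wa3 : Wc.a₃ = 0 := rfl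
@[simp] private lemma Wa4 : Wc.a₄ = 32 / 3 := rfl
@[simp] private lemma Wa6 : Wc.a₆ = 880 / 27 := rfl

private lemma negY_W (x y : ℚ) : Wc.negY x y = -y := by
  simp [WeierstrassCurve.Affine.negY]

private lemma ns (x y : ℚ) (heq : y ^ 2 = x ^ 3 + 32 / 3 * x + 880 / 27) (hy : y ≠ 0) :
    Wc.Nonsingular x y := by
  rw [nonsingular_iff, equation_iff]
  refine ⟨by simpa using heq, Or.inr ?_⟩
  simp only [Wa1, Wa3]
  intro h
  apply hy
  linarith

private lemma vint (a : ℤ) (ha : ¬ (2:ℤ) ∣ a) : padicValRat 2 (a : ℚ) = 0 := by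
  rw [padicValRat.of_int, padicValInt.eq_zero_of_not_dvd ha]; rfl

private lemma vrat (a b : ℤ) (k n : ℕ) (ha : ¬ (2:ℤ) ∣ a) (hb : ¬ (2:ℤ) ∣ b)
    (q : ℚ) (hq : q = (2 ^ k * a) / (2 ^ n * b)) :
    padicValRat 2 q = (k : ℤ) - n := by
  have ha0 : (a : ℚ) ≠ 0 := by exact_mod_cast fun h => ha (by simp [h])
  have hb0 : (b : ℚ) ≠ 0 := by exact_mod_cast fun h => hb (by simp [h])
  have h2 : (2 : ℚ) ≠ 0 := two_ne_zero
  rw [hq, padicValRat.div (mul_ne_zero (pow_ne_zero _ h2) ha0)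
      (mul_ne_zero (pow_ne_zero _ h2) hb0),
    padicValRat.mul (pow_ne_zero _ h2) ha0, padicValRat.mul (pow_ne_zero _ h2) hb0,
    padicValRat.pow _, padicValRat.pow _, vint a ha, vint b hb]
  have : padicValRat 2 (2 : ℚ) = 1 := by
    simpa using padicValRat.self (p := 2) one_lt_two
  rw [this]; ring

private lemma vadd {q r : ℚ} (hq : q ≠ 0) (hr : r ≠ 0)
    (h : padicValRat 2 q < padicValRat 2 r) :
    q + r ≠ 0 ∧ padicValRat 2 (q + r) = padicValRat 2 q := by
  have hne : q + r ≠ 0 := by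
    intro h0
    have : r = -q := by linarith [eq_neg_of_add_eq_zero_right h0]
    rw [this, padicValRat.neg] at h
    exact lt_irrefl _ h
  exact ⟨hne, padicValRat.add_eq_of_lt hne hq hr h⟩

private lemma v32 : padicValRat 2 (32 / 3 : ℚ) = 5 :=
  vrat 1 3 5 0 (by decide) (by decide) _ (by norm_num)

private lemma v880 : padicValRat 2 (880 / 27 : ℚ) = 4 :=
  vrat 55 27 4 0 (by decide) (by decide) _ (by norm_num)

private lemma v3q : padicValRat 2 (3 : ℚ) = 0 := by
  simpa using vint 3 (by decide)

private lemma v2q : padicValRat 2 (2 : ℚ) = 1 := by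
  simpa using padicValRat.self (p := 2) one_lt_two

/-- Key descent: y-coordinate valuation from the equation. -/
private lemma yval {x y : ℚ} (heq : y ^ 2 = x ^ 3 + 32 / 3 * x + 880 / 27)
    {m : ℤ} (hm : 0 ≤ m) (hx : padicValRat 2 x = -(2 * m + 2)) :
    y ≠ 0 ∧ padicValRat 2 y = -(3 * m + 3) := by
  have hx0 : x ≠ 0 := fun h => by rw [h, padicValRat.zero] at hx; omega
  have h32 : (32 / 3 : ℚ) ≠ 0 := by norm_num
  have h880 : (880 / 27 : ℚ) ≠ 0 := by norm_num
  have hx3 : padicValRat 2 (x ^ 3) = -(6 * m + 6) := by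
    rw [padicValRat.pow _, hx]; push_cast; ring
  have hax : padicValRat 2 (32 / 3 * x) = 3 - 2 * m := by
    rw [padicValRat.mul h32 hx0, v32, hx]; ring
  have h1 := vadd (pow_ne_zero 3 hx0) (mul_ne_zero h32 hx0)
    (by rw [hx3, hax]; omega)
  have h2 := vadd h1.1 h880 (by rw [h1.2, hx3, v880]; omega)
  rw [← heq] at h2
  have hy0 : y ≠ 0 := fun h => h2.1 (by rw [h]; ring)
  have : padicValRat 2 (y ^ 2) = -(6 * m + 6) := by rw [h2.2, h1.2, hx3]
  rw [padicValRat.pow _] at this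
  exact ⟨hy0, by push_cast at this; omega⟩

/-- The doubling step. -/
private lemma double {x y : ℚ} (h : Wc.Nonsingular x y) {m : ℤ} (hm : 0 ≤ m)
    (hx : padicValRat 2 x = -(2 * m + 2)) :
    ∃ (x' y' : ℚ) (h' : Wc.Nonsingular x' y'),
      (Point.some _ _ h + Point.some _ _ h : Wc.Point) = Point.some _ _ h' ∧
      padicValRat 2 x' = -(2 * (m + 1) + 2) := by
  have heq : y ^ 2 = x ^ 3 + 32 / 3 * x + 880 / 27 := by
    have := ((Wc.nonsingular_iff x y).mp h).1
    rw [equation_iff] at this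
    simpa using this
  obtain ⟨hy0, hy⟩ := yval heq hm hx
  have hx0 : x ≠ 0 := fun h => by rw [h, padicValRat.zero] at hx; omega
  have hyne : y ≠ Wc.negY x y := by
    rw [negY_W]; intro hc; apply hy0; linarith
  -- slope
  have hL : Wc.slope x x y y = (3 * x ^ 2 + 32 / 3) / (2 * y) := by
    rw [slope_of_Y_ne rfl hyne, negY_W]
    simp only [Wa1, Wa2, Wa4]
    ring_nf
  have h3x2 : (3 : ℚ) * x ^ 2 ≠ 0 := by positivity
  have hv3x2 : padicValRat 2 (3 * x ^ 2) = -(4 * m + 4) := by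
    rw [padicValRat.mul (by norm_num) (pow_ne_zero 2 hx0), v3q, padicValRat.pow _, hx]
    push_cast; ring
  have hnum := vadd h3x2 (by norm_num : (32 / 3 : ℚ) ≠ 0) (by rw [hv3x2, v32]; omega)
  have h2y : (2 : ℚ) * y ≠ 0 := mul_ne_zero two_ne_zero hy0
  have hv2y : padicValRat 2 (2 * y) = -(3 * m + 2) := by
    rw [padicValRat.mul two_ne_zero hy0, v2q, hy]; ring
  have hL0 : Wc.slope x x y y ≠ 0 := by
    rw [hL]; exact div_ne_zero hnum.1 h2y
  have hvL : padicValRat 2 (Wc.slope x x y y) = -(m + 2) := by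
    rw [hL, padicValRat.div hnum.1 h2y, hnum.2, hv3x2, hv2y]; ring
  -- addX
  have haddX : Wc.addX x x (Wc.slope x x y y) =
      (Wc.slope x x y y) ^ 2 + (-(2 * x)) := by
    simp only [WeierstrassCurve.Affine.addX, Wa1, Wa2]; ring
  have hvL2 : padicValRat 2 ((Wc.slope x x y y) ^ 2) = -(2 * m + 4) := by
    rw [padicValRat.pow _, hvL]; push_cast; ring
  have hv2x : padicValRat 2 (-(2 * x)) = -(2 * m + 1) := by
    rw [padicValRat.neg, padicValRat.mul two_ne_zero hx0, v2q, hx]; ring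
  have hres := vadd (pow_ne_zero 2 hL0) (neg_ne_zero.mpr (mul_ne_zero (two_ne_zero (α := ℚ)) hx0))
    (by rw [hvL2, hv2x]; omega)
  refine ⟨_, _, nonsingular_add h h fun hxy => hyne hxy.right, Point.add_self_of_Y_ne hyne, ?_⟩
  rw [haddX, hres.2, hvL2]; ring

private lemma iter {x y : ℚ} (h : Wc.Nonsingular x y)
    (hx : padicValRat 2 x = -2) (j : ℕ) :
    ∃ (x' y' : ℚ) (h' : Wc.Nonsingular x' y'),
      ((2 ^ j : ℕ) • (Point.some _ _ h) : Wc.Point) = Point.some _ _ h' ∧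
      padicValRat 2 x' = -(2 * (j : ℤ) + 2) := by
  induction j with
  | zero => exact ⟨x, y, h, by simp, by rw [hx]; norm_num⟩
  | succ n ih =>
    obtain ⟨x', y', h', hp, hv⟩ := ih
    obtain ⟨x'', y'', h'', hp2, hv2⟩ := double h' (m := (n : ℤ)) (Int.natCast_nonneg n)
      (by rw [hv])
    refine ⟨x'', y'', h'', ?_, by rw [hv2]; push_cast; ring⟩
    have : (2 ^ (n + 1) : ℕ) • (Point.some _ _ h : Wc.Point)
        = (2 ^ n : ℕ) • (Point.some _ _ h) + (2 ^ n : ℕ) • (Point.some _ _ h) := by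
      rw [← add_nsmul]; congr 1; ring
    rw [this, hp, hp2]

/-- x-coordinate of a point. -/
private def xc : Wc.Point → ℚ
  | .zero => 0
  | @WeierstrassCurve.Affine.Point.some _ _ _ x _ _ => x

private lemma some_congr {x y x' y' : ℚ} (hx : x = x') (hy : y = y')
    (h : Wc.Nonsingular x y) (h' : Wc.Nonsingular x' y') :
    (Point.some _ _ h : Wc.Point) = Point.some _ _ h' := by
  subst hx; subst hy; rfl

private lemma hP : Wc.Nonsingular (-4 / 3) 4 := ns _ _ (by norm_num) (by norm_num)
private lemma hP2 : Wc.Nonsingular (20 / 3) (-20) := ns _ _ (by norm_num) (by norm_num)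
private lemma hP3 : Wc.Nonsingular (11 / 3) 11 := ns _ _ (by norm_num) (by norm_num)
private lemma hQ : Wc.Nonsingular (-2845 / 1452) (21745 / 10648) :=
  ns _ _ (by norm_num) (by norm_num)

private lemma e2 : (Point.some _ _ hP + Point.some _ _ hP : Wc.Point) = Point.some _ _ hP2 := by
  have hy1 : (4 : ℚ) ≠ Wc.negY (-4 / 3) 4 := by rw [negY_W]; norm_num
  rw [Point.add_self_of_Y_ne hy1]
  have hs : Wc.slope (-4 / 3) (-4 / 3) 4 4 = 2 := by
    rw [slope_of_Y_ne rfl hy1, negY_W]; simp; norm_num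
  refine some_congr ?_ ?_ _ hP2 <;> rw [hs] <;> simp [negY_W, addX, addY, negAddY] <;> norm_num

private lemma e3 : (Point.some _ _ hP2 + Point.some _ _ hP : Wc.Point) = Point.some _ _ hP3 := by
  have hx1 : (20 / 3 : ℚ) ≠ -4 / 3 := by norm_num
  rw [Point.add_of_X_ne hx1]
  have hs : Wc.slope (20 / 3) (-4 / 3) (-20) 4 = -3 := by
    rw [slope_of_X_ne hx1]; norm_num
  refine some_congr ?_ ?_ _ hP3 <;> rw [hs] <;> simp [negY_W, addX, addY, negAddY] <;> norm_num

private lemma e6 : (Point.some _ _ hP3 + Point.some _ _ hP3 : Wc.Point) = Point.some _ _ hQ := by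
  have hy1 : (11 : ℚ) ≠ Wc.negY (11 / 3) 11 := by rw [negY_W]; norm_num
  rw [Point.add_self_of_Y_ne hy1]
  have hs : Wc.slope (11 / 3) (11 / 3) 11 11 = 51 / 22 := by
    rw [slope_of_Y_ne rfl hy1, negY_W]; simp; norm_num
  refine some_congr ?_ ?_ _ hQ <;> rw [hs] <;> simp [negY_W, addX, addY, negAddY] <;> norm_num

private lemma vQx : padicValRat 2 (-2845 / 1452 : ℚ) = -2 :=
  (vrat (-2845) 363 0 2 (by decide) (by decide) _ (by norm_num)).trans (by norm_num)

private lemma Qnotfin : ¬ IsOfFinAddOrder (Point.some _ _ hQ : Wc.Point) := by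
  intro hQfin
  have hfinset : (AddSubgroup.zmultiples (Point.some _ _ hQ) : Set Wc.Point).Finite :=
    hQfin.finite_zmultiples
  refine Set.infinite_of_injective_forall_mem
    (f := fun j : ℕ => ((2 ^ j : ℕ) • (Point.some _ _ hQ) : Wc.Point)) ?_ ?_ hfinset
  · intro j k hjk
    obtain ⟨xj, yj, hj, ej, vj⟩ := iter hQ vQx j
    obtain ⟨xk, yk, hk, ek, vk⟩ := iter hQ vQx k
    simp only at hjk
    rw [ej, ek] at hjk
    have hx : xj = xk := congrArg xc hjk
    rw [hx, vk] at vj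
    omega
  · intro j
    exact ⟨(2 ^ j : ℕ), natCast_zsmul _ _⟩

/-- On the elliptic curve `E : y² = x³ + (32/3)x + 880/27` over `ℚ` (which has nonzero
discriminant), the rational point `P = (−4/3, 4)` lies on `E` and has infinite order in
`E(ℚ)`. -/
theorem statement14 (E : WeierstrassCurve.Affine ℚ)
    (hE : E = { a₁ := 0, a₂ := 0, a₃ := 0, a₄ := 32 / 3, a₆ := 880 / 27 }) :
    E.Δ ≠ 0 ∧
    ∃ h : E.Nonsingular (-4 / 3) 4,
      ¬ IsOfFinAddOrder (WeierstrassCurve.Affine.Point.some _ _ h) := by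
  subst hE
  refine ⟨?_, hP, fun hfin => ?_⟩
  · show Wc.Δ ≠ 0
    simp only [WeierstrassCurve.Δ, WeierstrassCurve.b₂, WeierstrassCurve.b₄,
      WeierstrassCurve.b₆, WeierstrassCurve.b₈, Wa1, Wa2, Wa3, Wa4, Wa6]
    norm_num
  · have h3fin : IsOfFinAddOrder (Point.some _ _ hP3 : Wc.Point) := by
      rw [← e3, ← e2]; exact (hfin.add hfin).add hfin
    have hQfin : IsOfFinAddOrder (Point.some _ _ hQ : Wc.Point) := by
      rw [← e6]; exact h3fin.add h3fin
    exact Qnotfin hQfin
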